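/- Fix a real number p > 0 and let ψ(t) = (1 + (t + √(t²+4t))/2)^{p/2} + (1 + (t − √(t²+4t))/2)^{p/2} for t ≥ 0. Then ψ is twice differentiable on (0,∞) and satisfies the differential equation (t² + 4t)·ψ''(t) + (t + 2)·ψ'(t) − (p²/4)·ψ(t) = 0 for all t > 0. -/

import Mathlib

noncomputable def psiFun (p : ℝ) (t : ℝ) : ℝ :=
  (1 + (t + Real.sqrt (t ^ 2 + 4 * t)) / 2) ^ (p / 2) +
    (1 + (t - Real.sqrt (t ^ 2 + 4 * t)) / 2) ^ (p / 2)

noncomputable def psiD (p : ℝ) (t : ℝ) : ℝ :=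
  p / 2 * ((1 + (t + Real.sqrt (t ^ 2 + 4 * t)) / 2) ^ (p / 2) -
    (1 + (t - Real.sqrt (t ^ 2 + 4 * t)) / 2) ^ (p / 2)) / Real.sqrt (t ^ 2 + 4 * t)

noncomputable def psiD2 (p : ℝ) (t : ℝ) : ℝ :=
  (p / 2 * (p / 2) * ((1 + (t + Real.sqrt (t ^ 2 + 4 * t)) / 2) ^ (p / 2) +
      (1 + (t - Real.sqrt (t ^ 2 + 4 * t)) / 2) ^ (p / 2)) -
    (t + 2) * (p / 2 * ((1 + (t + Real.sqrt (t ^ 2 + 4 * t)) / 2) ^ (p / 2) -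
      (1 + (t - Real.sqrt (t ^ 2 + 4 * t)) / 2) ^ (p / 2)) / Real.sqrt (t ^ 2 + 4 * t))) /
    Real.sqrt (t ^ 2 + 4 * t) ^ 2

lemma cancel_aux (a b c q : ℝ) (ha : a ≠ 0) (hb : b ≠ 0) : a / b * q * (c / a) = q * c / b := by
  field_simp

lemma cancel_aux' (a b c q : ℝ) (ha : a ≠ 0) (hb : b ≠ 0) : -a / b * q * (c / a) = -(q * c / b) := by
  field_simp

lemma basic_facts (t : ℝ) (ht : 0 < t) :
    0 < Real.sqrt (t ^ 2 + 4 * t) ∧ Real.sqrt (t ^ 2 + 4 * t) ^ 2 = t ^ 2 + 4 * t ∧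
    Real.sqrt (t ^ 2 + 4 * t) < t + 2 := by
  have h1 : (0:ℝ) < t ^ 2 + 4 * t := by nlinarith
  refine ⟨Real.sqrt_pos.mpr h1, Real.sq_sqrt h1.le, ?_⟩
  rw [show t + 2 = Real.sqrt ((t+2)^2) from (Real.sqrt_sq (by linarith)).symm]
  exact Real.sqrt_lt_sqrt h1.le (by nlinarith)

lemma hasDerivAt_sqrt_part (t : ℝ) (ht : 0 < t) :
    HasDerivAt (fun x : ℝ => Real.sqrt (x ^ 2 + 4 * x))
      ((2 * t + 4) / (2 * Real.sqrt (t ^ 2 + 4 * t))) t := by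
  have h1 : (0:ℝ) < t ^ 2 + 4 * t := by nlinarith
  have hS : HasDerivAt (fun x : ℝ => x ^ 2 + 4 * x) (2 * t + 4) t := by
    have := (hasDerivAt_pow 2 t).add ((hasDerivAt_id t).const_mul 4)
    exact this.congr_deriv (by norm_num)
  simpa using hS.sqrt h1.ne'

/-- Clean derivative of the first rpow factor. -/
lemma hasDerivAt_A (p : ℝ) (t : ℝ) (ht : 0 < t) :
    HasDerivAt (fun x : ℝ => (1 + (x + Real.sqrt (x ^ 2 + 4 * x)) / 2) ^ (p / 2))
      (p / 2 * (1 + (t + Real.sqrt (t ^ 2 + 4 * t)) / 2) ^ (p / 2) / Real.sqrt (t ^ 2 + 4 * t))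
      t := by
  obtain ⟨hs, hs2, hslt⟩ := basic_facts t ht
  have hu1 : (0:ℝ) < 1 + (t + Real.sqrt (t ^ 2 + 4 * t)) / 2 := by positivity
  have hds := hasDerivAt_sqrt_part t ht
  have hd1 : HasDerivAt (fun x : ℝ => 1 + (x + Real.sqrt (x ^ 2 + 4 * x)) / 2)
      ((1 + (2 * t + 4) / (2 * Real.sqrt (t ^ 2 + 4 * t))) / 2) t := by
    simpa using (((hasDerivAt_id t).add hds).div_const 2).const_add 1
  have hA := hd1.rpow_const (p := p / 2) (Or.inl hu1.ne')
  convert hA using 1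
  rw [Real.rpow_sub_one hu1.ne']
  set s := Real.sqrt (t ^ 2 + 4 * t) with hsdef
  clear_value s
  rw [show (1 + (2 * t + 4) / (2 * s)) / 2 = (1 + (t + s) / 2) / s by
    field_simp; ring]
  rw [cancel_aux _ _ _ _ hu1.ne' hs.ne']
/-- Clean derivative of the second rpow factor. -/
lemma hasDerivAt_B (p : ℝ) (t : ℝ) (ht : 0 < t) :
    HasDerivAt (fun x : ℝ => (1 + (x - Real.sqrt (x ^ 2 + 4 * x)) / 2) ^ (p / 2))
      (-(p / 2 * (1 + (t - Real.sqrt (t ^ 2 + 4 * t)) / 2) ^ (p / 2) / Real.sqrt (t ^ 2 + 4 * t)))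
      t := by
  obtain ⟨hs, hs2, hslt⟩ := basic_facts t ht
  have hu2 : (0:ℝ) < 1 + (t - Real.sqrt (t ^ 2 + 4 * t)) / 2 := by linarith
  have hds := hasDerivAt_sqrt_part t ht
  have hd2 : HasDerivAt (fun x : ℝ => 1 + (x - Real.sqrt (x ^ 2 + 4 * x)) / 2)
      ((1 - (2 * t + 4) / (2 * Real.sqrt (t ^ 2 + 4 * t))) / 2) t := by
    simpa using (((hasDerivAt_id t).sub hds).div_const 2).const_add 1
  have hB := hd2.rpow_const (p := p / 2) (Or.inl hu2.ne')
  convert hB using 1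
  rw [Real.rpow_sub_one hu2.ne']
  set s := Real.sqrt (t ^ 2 + 4 * t) with hsdef
  clear_value s
  rw [show (1 - (2 * t + 4) / (2 * s)) / 2 = -(1 + (t - s) / 2) / s by
    field_simp; ring]
  rw [cancel_aux' _ _ _ _ hu2.ne' hs.ne']

lemma hasDerivAt_psiFun (p : ℝ) (t : ℝ) (ht : 0 < t) :
    HasDerivAt (psiFun p) (psiD p t) t := by
  obtain ⟨hs, hs2, hslt⟩ := basic_facts t ht
  have h := (hasDerivAt_A p t ht).add (hasDerivAt_B p t ht)
  have hval : p / 2 * (1 + (t + Real.sqrt (t ^ 2 + 4 * t)) / 2) ^ (p / 2) /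
        Real.sqrt (t ^ 2 + 4 * t) +
      -(p / 2 * (1 + (t - Real.sqrt (t ^ 2 + 4 * t)) / 2) ^ (p / 2) /
        Real.sqrt (t ^ 2 + 4 * t)) = psiD p t := by
    unfold psiD
    set s := Real.sqrt (t ^ 2 + 4 * t) with hsdef
    clear_value s
    field_simp
    ring
  rw [← hval]
  exact h

lemma hasDerivAt_psiD (p : ℝ) (t : ℝ) (ht : 0 < t) :
    HasDerivAt (psiD p) (psiD2 p t) t := by
  obtain ⟨hs, hs2, hslt⟩ := basic_facts t ht
  have hds := hasDerivAt_sqrt_part t ht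
  have h := ((((hasDerivAt_A p t ht).sub (hasDerivAt_B p t ht)).const_mul (p / 2)).div
    hds hs.ne')
  have hval :
      (p / 2 * (p / 2 * (1 + (t + Real.sqrt (t ^ 2 + 4 * t)) / 2) ^ (p / 2) /
            Real.sqrt (t ^ 2 + 4 * t) -
          -(p / 2 * (1 + (t - Real.sqrt (t ^ 2 + 4 * t)) / 2) ^ (p / 2) /
            Real.sqrt (t ^ 2 + 4 * t))) * Real.sqrt (t ^ 2 + 4 * t) -
        p / 2 * ((1 + (t + Real.sqrt (t ^ 2 + 4 * t)) / 2) ^ (p / 2) -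
          (1 + (t - Real.sqrt (t ^ 2 + 4 * t)) / 2) ^ (p / 2)) *
          ((2 * t + 4) / (2 * Real.sqrt (t ^ 2 + 4 * t)))) /
        Real.sqrt (t ^ 2 + 4 * t) ^ 2 = psiD2 p t := by
    unfold psiD2
    set s := Real.sqrt (t ^ 2 + 4 * t) with hsdef
    clear_value s
    field_simp
    ring
  rw [← hval]
  exact h

/-- For `p > 0`, the function `ψ` is twice differentiable on `(0, ∞)` and satisfies the
differential equation `(t² + 4t)·ψ'' + (t + 2)·ψ' − (p²/4)·ψ = 0` there. -/
theorem psi_satisfies_ode (p : ℝ) (hp : 0 < p) :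
    ∀ t : ℝ, 0 < t →
      DifferentiableAt ℝ (psiFun p) t ∧
      DifferentiableAt ℝ (deriv (psiFun p)) t ∧
      (t ^ 2 + 4 * t) * deriv (deriv (psiFun p)) t + (t + 2) * deriv (psiFun p) t -
        p ^ 2 / 4 * psiFun p t = 0 := by
  intro t ht
  obtain ⟨hs, hs2, hslt⟩ := basic_facts t ht
  have hEq : deriv (psiFun p) =ᶠ[nhds t] psiD p := by
    filter_upwards [Ioi_mem_nhds ht] with x hx
    exact (hasDerivAt_psiFun p x hx).deriv
  have hd1 : deriv (psiFun p) t = psiD p t := (hasDerivAt_psiFun p t ht).deriv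
  have hdd : deriv (deriv (psiFun p)) t = psiD2 p t := by
    rw [hEq.deriv_eq]
    exact (hasDerivAt_psiD p t ht).deriv
  refine ⟨(hasDerivAt_psiFun p t ht).differentiableAt, ?_, ?_⟩
  · exact (hEq.differentiableAt_iff).mpr (hasDerivAt_psiD p t ht).differentiableAt
  · rw [hdd, hd1]
    unfold psiD2 psiD psiFun
    set s := Real.sqrt (t ^ 2 + 4 * t) with hsdef
    clear_value s
    rw [← hs2]
    field_simp
    ring
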